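/- If u and v are real numbers with 2/3 ≤ u ≤ 1 ≤ v ≤ 3/2 and 1/u + 1/v ≥ 2, then v ≤ 1 + (5/4)·√(1 - u). -/
import Mathlib


theorem stmt_14 (u v : ℝ) (hu1 : 2/3 ≤ u) (hu2 : u ≤ 1) (hv1 : 1 ≤ v) (hv2 : v ≤ 3/2)
    (h : 1/u + 1/v ≥ 2) :
    v ≤ 1 + (5/4) * Real.sqrt (1 - u) := by
  have hu0 : 0 < u := by linarith
  have hv0 : 0 < v := by linarith
  set s := Real.sqrt (1 - u) with hs
  have hs0 : 0 ≤ s := Real.sqrt_nonneg _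
  have hs2 : s ^ 2 = 1 - u := Real.sq_sqrt (by linarith)
  have key : u + v ≥ 2 * (u * v) := by
    have := mul_le_mul_of_nonneg_left h (le_of_lt (mul_pos hu0 hv0))
    have h1 : u * v * (1/u + 1/v) = v + u := by field_simp
    nlinarith [mul_pos hu0 hv0]
  rcases le_or_gt u (21/25) with hc | hc
  · -- s ≥ 2/5
    have : (2/5 : ℝ) ≤ s := by
      nlinarith [sq_nonneg (s - 2/5)]
    linarith
  · -- s ≤ 2/5, and v ≤ u/(2u-1)
    have hs25 : s ≤ 2/5 := by nlinarith [sq_nonneg (s + 2/5)]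
    nlinarith [sq_nonneg (s - 2/5), mul_nonneg hs0 (sub_nonneg.mpr hs25), sq_nonneg s]
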